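/- (Composite AS-RTI-D error bound) Let z_lin be obtained from z^k by N_D Newton-type iterations on the advanced problem with parameter x_pred, so that ‖z_lin − z̄(x_pred)‖ ≤ α^{N_D}‖z^k − z̄(x_pred)‖ with α = κ + (ω/2)‖z^k − z̄(x_pred)‖ < 1. Then the feedback step at parameter x⁺ satisfies ‖z̄(x⁺) − z⁺‖ ≤ (κσ + (ωσ²/2)δ)δ + (κ + ωσδ + (ω/2)α^{N_D}e)α^{N_D}e, where δ = ‖x⁺ − x_pred‖ and e = ‖z^k − z̄(x_pred)‖. -/

import Mathlib

/-- Composite AS-RTI-D error bound: combining the N_D-step contraction of the inner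
iterations with the one-step predictor-corrector feedback bound. -/
theorem stmt_12 {E P : Type*} [NormedAddCommGroup E] [NormedSpace ℝ E]
    [NormedAddCommGroup P] [NormedSpace ℝ P]
    (zbar : P → E) (κ ω σ α : ℝ) (ND : ℕ) (xplus xpred : P) (zk zlin zplus : E)
    (hκ0 : 0 ≤ κ) (hκ1 : κ < 1) (hω : 0 ≤ ω) (hσ : 0 ≤ σ)
    (hα : α = κ + ω / 2 * ‖zk - zbar xpred‖) (hα1 : α < 1)
    -- inner iterations contraction
    (hinner : ‖zlin - zbar xpred‖ ≤ α ^ ND * ‖zk - zbar xpred‖)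
    -- one-step predictor-corrector bound of the feedback phase
    (hfeed : ‖zbar xplus - zplus‖ ≤
      (κ * σ + ω * σ ^ 2 / 2 * ‖xplus - xpred‖) * ‖xplus - xpred‖ +
      (κ + ω * σ * ‖xplus - xpred‖ + ω / 2 * ‖zbar xpred - zlin‖) *
        ‖zbar xpred - zlin‖) :
    ‖zbar xplus - zplus‖ ≤
      (κ * σ + ω * σ ^ 2 / 2 * ‖xplus - xpred‖) * ‖xplus - xpred‖ +
      (κ + ω * σ * ‖xplus - xpred‖ + ω / 2 * (α ^ ND * ‖zk - zbar xpred‖)) *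
        (α ^ ND * ‖zk - zbar xpred‖) := by
  have ht : ‖zbar xpred - zlin‖ ≤ α ^ ND * ‖zk - zbar xpred‖ := by
    rw [norm_sub_rev]; exact hinner
  have h0 : (0:ℝ) ≤ ‖zbar xpred - zlin‖ := norm_nonneg _
  have hd : (0:ℝ) ≤ ‖xplus - xpred‖ := norm_nonneg _
  have hαnn : (0:ℝ) ≤ α := by
    rw [hα]; positivity
  have ha : (0:ℝ) ≤ α ^ ND * ‖zk - zbar xpred‖ := by positivity
  refine hfeed.trans (add_le_add_right ?_ _)
  have hcoef : κ + ω * σ * ‖xplus - xpred‖ + ω / 2 * ‖zbar xpred - zlin‖ ≤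
      κ + ω * σ * ‖xplus - xpred‖ + ω / 2 * (α ^ ND * ‖zk - zbar xpred‖) := by
    gcongr
  exact mul_le_mul hcoef ht h0 (by positivity)
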